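/- In the two-group measurement-error model without group information, the statistical loss discrepancy based on squared error equals |(Λβ)^T ΔΣ_z (Λβ) - (P[g=1] - P[g=0])((Λβ)^T Δμ_z)²|, where ΔΣ_z = Var[z|g=1] - Var[z|g=0]. -/

import Mathlib

open MeasureTheory ProbabilityTheory Matrix
open scoped ENNReal

/-- Mean vector of a random vector. -/
noncomputable def meanV {Ω : Type*} [MeasurableSpace Ω] (P : Measure Ω) {d : ℕ}
    (z : Ω → Fin d → ℝ) : Fin d → ℝ := fun i => ∫ ω, z ω i ∂P

/-- Covariance matrix of a random vector. -/
noncomputable def covM {Ω : Type*} [MeasurableSpace Ω] (P : Measure Ω) {d : ℕ}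
    (z : Ω → Fin d → ℝ) : Matrix (Fin d) (Fin d) ℝ :=
  Matrix.of fun i j => ∫ ω, (z ω i - meanV P z i) * (z ω j - meanV P z j) ∂P

section Helpers

lemma L2mul {Ω : Type*} [MeasurableSpace Ω] {μ : Measure Ω} {f g : Ω → ℝ}
    (hf : MemLp f 2 μ) (hg : MemLp g 2 μ) : Integrable (fun ω => f ω * g ω) μ := by
  have h := hg.smul (r := 1) hf (hpqr := ⟨by simp only [one_div, inv_one, ENNReal.inv_two_add_inv_two]⟩)
  rw [memLp_one_iff_integrable] at h
  exact h

lemma cond_int {Ω : Type*} [MeasurableSpace Ω] (P : Measure Ω) (A : Set Ω) (f : Ω → ℝ) :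
    ∫ ω, f ω ∂(ProbabilityTheory.cond P A) = (P A).toReal⁻¹ * ∫ ω in A, f ω ∂P := by
  rw [ProbabilityTheory.cond, integral_smul_measure, ENNReal.toReal_inv, smul_eq_mul]

variable {Ω : Type*} [MeasurableSpace Ω] {μ : Measure Ω} {d : ℕ} {z : Ω → Fin d → ℝ}
  {a : Fin d → ℝ}

lemma dotL2 (hz : ∀ i, MemLp (fun ω => z ω i) 2 μ) :
    MemLp (fun ω => a ⬝ᵥ z ω) 2 μ := by
  have h : (fun ω => a ⬝ᵥ z ω) = fun ω => ∑ i, a i * z ω i := rfl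
  rw [h]
  exact memLp_finset_sum Finset.univ (fun i _ => (hz i).const_mul (a i))

lemma dot_integral [IsProbabilityMeasure μ] (hz : ∀ i, MemLp (fun ω => z ω i) 2 μ) :
    ∫ ω, a ⬝ᵥ z ω ∂μ = a ⬝ᵥ meanV μ z := by
  have h : (fun ω => a ⬝ᵥ z ω) = fun ω => ∑ i, a i * z ω i := rfl
  rw [h, integral_finset_sum _ (fun i _ => ((hz i).integrable (by norm_num)).const_mul (a i))]
  simp [dotProduct, meanV, integral_const_mul]

lemma var_shift [IsProbabilityMeasure μ] {Z : Ω → ℝ} (hZ : MemLp Z 2 μ) (m : ℝ) :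
    ∫ ω, (Z ω - m)^2 ∂μ
      = (∫ ω, (Z ω - ∫ ω', Z ω' ∂μ)^2 ∂μ) + ((∫ ω', Z ω' ∂μ) - m)^2 := by
  set c := ∫ ω', Z ω' ∂μ with hc
  have hint : Integrable Z μ := hZ.integrable (by norm_num)
  have hsq : Integrable (fun ω => (Z ω - c)^2) μ := (hZ.sub (memLp_const c)).integrable_sq
  have h1 : Integrable (fun ω => 2*(c-m)*(Z ω - c)) μ := by
    exact (hint.sub (integrable_const c)).const_mul _
  have key : ∀ ω, (Z ω - m)^2 = (Z ω - c)^2 + 2*(c-m)*(Z ω - c) + (c-m)^2 := by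
    intro ω; ring
  have h12 : Integrable (fun ω => (Z ω - c)^2 + 2*(c-m)*(Z ω - c)) μ := by exact hsq.add h1
  simp_rw [key]
  rw [integral_add h12 (integrable_const _), integral_add hsq h1,
      integral_const_mul, integral_sub hint (integrable_const c)]
  simp [← hc]

lemma cov_quad [IsProbabilityMeasure μ] (hz : ∀ i, MemLp (fun ω => z ω i) 2 μ) :
    a ⬝ᵥ (covM μ z *ᵥ a) = ∫ ω, (a ⬝ᵥ z ω - a ⬝ᵥ meanV μ z)^2 ∂μ := by
  have hfi : ∀ i, MemLp (fun ω => z ω i - meanV μ z i) 2 μ :=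
    fun i => (hz i).sub (memLp_const _)
  have hint : ∀ i j : Fin d, Integrable
      (fun ω => (z ω i - meanV μ z i) * (z ω j - meanV μ z j)) μ :=
    fun i j => L2mul (hfi i) (hfi j)
  have expand : ∀ ω, (a ⬝ᵥ z ω - a ⬝ᵥ meanV μ z)^2
      = ∑ i, ∑ j, a i * ((z ω i - meanV μ z i) * (z ω j - meanV μ z j) * a j) := by
    intro ω
    have h1 : a ⬝ᵥ z ω - a ⬝ᵥ meanV μ z = ∑ i, a i * (z ω i - meanV μ z i) := by
      simp [dotProduct, mul_sub, Finset.sum_sub_distrib]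
    rw [h1, sq, Finset.sum_mul_sum]
    refine Finset.sum_congr rfl fun i _ => Finset.sum_congr rfl fun j _ => by ring
  simp_rw [expand]
  rw [integral_finset_sum _ (fun i _ => integrable_finset_sum _
    (fun j _ => ((hint i j).mul_const (a j)).const_mul (a i)))]
  have h2 : ∀ i : Fin d, ∫ ω, ∑ j, a i * ((z ω i - meanV μ z i) * (z ω j - meanV μ z j) * a j) ∂μ
      = ∑ j, ∫ ω, a i * ((z ω i - meanV μ z i) * (z ω j - meanV μ z j) * a j) ∂μ :=
    fun i => integral_finset_sum _ (fun j _ => ((hint i j).mul_const (a j)).const_mul (a i))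
  simp_rw [h2, integral_const_mul, integral_mul_const]
  simp [dotProduct, mulVec, covM, Finset.mul_sum, mul_assoc]

end Helpers

/-- Two-group measurement-error model without group information: the statistical
loss discrepancy based on squared error equals
`|(Λβ)ᵀΔΣ_z(Λβ) - (P[g=1]-P[g=0])((Λβ)ᵀΔμ_z)²|`. -/
theorem stmt_6 {Ω : Type*} [MeasurableSpace Ω] (P : Measure Ω) [IsProbabilityMeasure P]
    {d : ℕ} (z u x : Ω → Fin d → ℝ) (g y yhat : Ω → ℝ) (β : Fin d → ℝ) (α : ℝ)
    (Λ ΔSz : Matrix (Fin d) (Fin d) ℝ) (Δμz : Fin d → ℝ)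
    (hgval : ∀ ω, g ω = 0 ∨ g ω = 1)
    (hgmeas : Measurable g)
    (hppos : 0 < P (g ⁻¹' {1}) ∧ P (g ⁻¹' {1}) < 1)
    (hx : ∀ ω, x ω = fun i => z ω i + u ω i)
    (hy : ∀ ω, y ω = β ⬝ᵥ z ω + α)
    (hindep : IndepFun (fun ω => (z ω, g ω)) u P)
    (hzL2 : ∀ i, MemLp (fun ω => z ω i) 2 P)
    (huL2 : ∀ i, MemLp (fun ω => u ω i) 2 P)
    (hu0 : ∀ i, ∫ ω, u ω i ∂P = 0)
    (hinv : IsUnit (covM P z + covM P u).det)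
    (hΛ : Λ = (covM P z + covM P u)⁻¹ * covM P u)
    (hΔ : ∀ i, Δμz i = (∫ ω, z ω i ∂(ProbabilityTheory.cond P (g ⁻¹' {1}))) -
      ∫ ω, z ω i ∂(ProbabilityTheory.cond P (g ⁻¹' {0})))
    (hΔS : ΔSz = covM (ProbabilityTheory.cond P (g ⁻¹' {1})) z -
      covM (ProbabilityTheory.cond P (g ⁻¹' {0})) z)
    (hyhat : ∀ ω, yhat ω = ((1 - Λ) *ᵥ β) ⬝ᵥ x ω + (Λ *ᵥ β) ⬝ᵥ meanV P z + α) :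
    |(∫ ω, (y ω - yhat ω) ^ 2 ∂(ProbabilityTheory.cond P (g ⁻¹' {1}))) -
        ∫ ω, (y ω - yhat ω) ^ 2 ∂(ProbabilityTheory.cond P (g ⁻¹' {0}))| =
      |(Λ *ᵥ β) ⬝ᵥ (ΔSz *ᵥ (Λ *ᵥ β)) -
        ((P (g ⁻¹' {1})).toReal - (P (g ⁻¹' {0})).toReal) * ((Λ *ᵥ β) ⬝ᵥ Δμz) ^ 2| := by
  classical
  set a : Fin d → ℝ := Λ *ᵥ β with ha
  set b : Fin d → ℝ := (1 - Λ) *ᵥ β with hb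
  set Z : Ω → ℝ := fun ω => a ⬝ᵥ z ω with hZ
  set U : Ω → ℝ := fun ω => b ⬝ᵥ u ω with hU
  set m : ℝ := a ⬝ᵥ meanV P z with hm
  -- events
  have hA : MeasurableSet (g ⁻¹' {(1:ℝ)}) := hgmeas (measurableSet_singleton 1)
  have hB : MeasurableSet (g ⁻¹' {(0:ℝ)}) := hgmeas (measurableSet_singleton 0)
  have hBc : g ⁻¹' {(0:ℝ)} = (g ⁻¹' {(1:ℝ)})ᶜ := by
    ext ω; rcases hgval ω with h | h <;> simp [Set.mem_preimage, h] <;> norm_num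
  have hPA0 : P (g ⁻¹' {(1:ℝ)}) ≠ 0 := hppos.1.ne'
  have hPB0 : P (g ⁻¹' {(0:ℝ)}) ≠ 0 := by
    rw [hBc, prob_compl_eq_one_sub hA]
    intro h
    exact hppos.2.not_ge (tsub_eq_zero_iff_le.mp h)
  set pA := (P (g ⁻¹' {(1:ℝ)})).toReal with hpAd
  set pB := (P (g ⁻¹' {(0:ℝ)})).toReal with hpBd
  have hpA : pA ≠ 0 := (ENNReal.toReal_pos hPA0 (measure_ne_top _ _)).ne'
  have hpB : pB ≠ 0 := (ENNReal.toReal_pos hPB0 (measure_ne_top _ _)).ne'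
  have hsum : pA + pB = 1 := by
    have h1 : P (g ⁻¹' {(1:ℝ)}) + P (g ⁻¹' {(0:ℝ)}) = 1 := by
      rw [hBc]
      simpa using measure_add_measure_compl (μ := P) hA
    have h2 := congrArg ENNReal.toReal h1
    rwa [ENNReal.toReal_add (measure_ne_top _ _) (measure_ne_top _ _), ENNReal.toReal_one] at h2
  -- residual decomposition
  have hres : ∀ ω, y ω - yhat ω = (Z ω - m) - U ω := by
    intro ω
    rw [hy, hyhat, hZ, hU, hm, hb]
    have hx' : ((1 - Λ) *ᵥ β) ⬝ᵥ x ω = ((1 - Λ) *ᵥ β) ⬝ᵥ z ω + ((1 - Λ) *ᵥ β) ⬝ᵥ u ω := by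
      rw [hx]; simp [dotProduct, mul_add, Finset.sum_add_distrib]
    rw [hx']
    simp only [sub_mulVec, one_mulVec, sub_dotProduct, ← ha]
    ring
  -- basic L2 and integrals
  have hZ2 : MemLp Z 2 P := dotL2 hzL2
  have hU2 : MemLp U 2 P := dotL2 huL2
  have hU0 : ∫ ω, U ω ∂P = 0 := by
    rw [hU]
    rw [dot_integral huL2]
    simp [meanV, dotProduct, hu0]
  have hZm2 : MemLp (fun ω => Z ω - m) 2 P := hZ2.sub (memLp_const m)
  -- measurability of linear maps
  have hFdot : ∀ c : Fin d → ℝ, Measurable (fun v : Fin d → ℝ => c ⬝ᵥ v) := fun c =>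
    Finset.measurable_sum _ (fun i _ => by fun_prop)
  -- indicator rewriting
  have indic : ∀ (s : ℝ) (f : Ω → ℝ) (ω : Ω),
      (g ⁻¹' {s}).indicator f ω = ({s} : Set ℝ).indicator (fun _ => (1:ℝ)) (g ω) * f ω := by
    intro s f ω
    by_cases h : g ω = s <;> simp [Set.indicator_apply, Set.mem_preimage, h]
  -- cross term vanishes on each group
  have cross : ∀ s : ℝ, ∫ ω in g ⁻¹' {s}, (Z ω - m) * U ω ∂P = 0 := by
    intro s
    have hS : MeasurableSet (g ⁻¹' {s}) := hgmeas (measurableSet_singleton s)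
    have hφ : Measurable (fun p : (Fin d → ℝ) × ℝ =>
        ({s} : Set ℝ).indicator (fun _ => (1:ℝ)) p.2 * (a ⬝ᵥ p.1 - m)) :=
      ((measurable_const.indicator (measurableSet_singleton s)).comp measurable_snd).mul
        (((hFdot a).comp measurable_fst).sub measurable_const)
    have hind : IndepFun
        (fun ω => ({s} : Set ℝ).indicator (fun _ => (1:ℝ)) (g ω) * (Z ω - m)) U P :=
      hindep.comp hφ (hFdot b)
    have hXm : AEStronglyMeasurable
        (fun ω => ({s} : Set ℝ).indicator (fun _ => (1:ℝ)) (g ω) * (Z ω - m)) P :=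
      (((measurable_const.indicator (measurableSet_singleton s)).comp
        hgmeas).aestronglyMeasurable).mul hZm2.aestronglyMeasurable
    have hmain := hind.integral_fun_mul_eq_mul_integral hXm hU2.aestronglyMeasurable
    rw [hU0, mul_zero] at hmain
    rw [← integral_indicator hS]
    calc ∫ ω, (g ⁻¹' {s}).indicator (fun ω => (Z ω - m) * U ω) ω ∂P
        = ∫ ω, (({s} : Set ℝ).indicator (fun _ => (1:ℝ)) (g ω) * (Z ω - m)) * U ω ∂P := by
          refine integral_congr_ae (Filter.Eventually.of_forall fun ω => ?_)
          rw [indic]; ring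
      _ = 0 := hmain
  -- squared noise on each group
  have sqU : ∀ s : ℝ, ∫ ω in g ⁻¹' {s}, U ω ^ 2 ∂P
      = (P (g ⁻¹' {s})).toReal * ∫ ω, U ω ^ 2 ∂P := by
    intro s
    have hS : MeasurableSet (g ⁻¹' {s}) := hgmeas (measurableSet_singleton s)
    have hφ : Measurable (fun p : (Fin d → ℝ) × ℝ =>
        ({s} : Set ℝ).indicator (fun _ => (1:ℝ)) p.2) :=
      (measurable_const.indicator (measurableSet_singleton s)).comp measurable_snd
    have hψ : Measurable (fun v : Fin d → ℝ => (b ⬝ᵥ v) ^ 2) := (hFdot b).pow_const 2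
    have hind : IndepFun
        (fun ω => ({s} : Set ℝ).indicator (fun _ => (1:ℝ)) (g ω)) (fun ω => U ω ^ 2) P :=
      hindep.comp hφ hψ
    have hXm : AEStronglyMeasurable
        (fun ω => ({s} : Set ℝ).indicator (fun _ => (1:ℝ)) (g ω)) P :=
      ((measurable_const.indicator (measurableSet_singleton s)).comp hgmeas).aestronglyMeasurable
    have hYm : AEStronglyMeasurable (fun ω => U ω ^ 2) P := by
      have := hU2.aestronglyMeasurable
      exact this.pow 2
    have hmain := hind.integral_fun_mul_eq_mul_integral hXm hYm
    have hIinteg : ∫ ω, ({s} : Set ℝ).indicator (fun _ => (1:ℝ)) (g ω) ∂P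
        = (P (g ⁻¹' {s})).toReal := by
      have : ∀ ω, ({s} : Set ℝ).indicator (fun _ => (1:ℝ)) (g ω)
          = (g ⁻¹' {s}).indicator (fun _ => (1:ℝ)) ω := fun ω => by rw [indic]; ring
      simp_rw [this]
      rw [integral_indicator_const (1:ℝ) hS]
      simp [Measure.real]
    rw [← integral_indicator hS]
    calc ∫ ω, (g ⁻¹' {s}).indicator (fun ω => U ω ^ 2) ω ∂P
        = ∫ ω, ({s} : Set ℝ).indicator (fun _ => (1:ℝ)) (g ω) * U ω ^ 2 ∂P := by
          refine integral_congr_ae (Filter.Eventually.of_forall fun ω => ?_)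
          rw [indic]
      _ = (P (g ⁻¹' {s})).toReal * ∫ ω, U ω ^ 2 ∂P := by rw [hmain, hIinteg]
  -- integrability over P
  have hint1 : Integrable (fun ω => (Z ω - m)^2) P := hZm2.integrable_sq
  have hint2 : Integrable (fun ω => (Z ω - m) * U ω) P := L2mul hZm2 hU2
  have hint3 : Integrable (fun ω => U ω ^ 2) P := hU2.integrable_sq
  set c : ℝ := ∫ ω, U ω ^ 2 ∂P with hcdef
  -- MemLp of z under conditional measures
  have hzQ : ∀ s : ℝ, P (g ⁻¹' {s}) ≠ 0 →
      ∀ i, MemLp (fun ω => z ω i) 2 (ProbabilityTheory.cond P (g ⁻¹' {s})) := by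
    intro s hs0 i
    rw [ProbabilityTheory.cond]
    exact ((hzL2 i).restrict _).smul_measure (ENNReal.inv_ne_top.mpr hs0)
  -- per-group expansion
  have group : ∀ s : ℝ, P (g ⁻¹' {s}) ≠ 0 →
      ∫ ω, (y ω - yhat ω) ^ 2 ∂(ProbabilityTheory.cond P (g ⁻¹' {s}))
        = a ⬝ᵥ (covM (ProbabilityTheory.cond P (g ⁻¹' {s})) z *ᵥ a)
          + ((a ⬝ᵥ meanV (ProbabilityTheory.cond P (g ⁻¹' {s})) z) - m) ^ 2 + c := by
    intro s hs0
    haveI : IsProbabilityMeasure (ProbabilityTheory.cond P (g ⁻¹' {s})) :=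
      cond_isProbabilityMeasure hs0
    have hzQ' := hzQ s hs0
    have hZQ2 : MemLp Z 2 (ProbabilityTheory.cond P (g ⁻¹' {s})) := dotL2 hzQ'
    have hmQ : ∫ ω, Z ω ∂(ProbabilityTheory.cond P (g ⁻¹' {s}))
        = a ⬝ᵥ meanV (ProbabilityTheory.cond P (g ⁻¹' {s})) z := dot_integral hzQ'
    have hpS : (P (g ⁻¹' {s})).toReal ≠ 0 :=
      (ENNReal.toReal_pos hs0 (measure_ne_top _ _)).ne'
    have e1 : ∀ ω, (y ω - yhat ω) ^ 2
        = (Z ω - m)^2 - 2*((Z ω - m) * U ω) + U ω ^ 2 := by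
      intro ω; rw [hres]; ring
    have hsub : Integrable (fun ω => (Z ω - m)^2 - 2*((Z ω - m) * U ω))
        (P.restrict (g ⁻¹' {s})) := by
      exact hint1.restrict.sub (hint2.restrict.const_mul 2)
    have split : ∫ ω in g ⁻¹' {s}, (y ω - yhat ω) ^ 2 ∂P
        = (∫ ω in g ⁻¹' {s}, (Z ω - m)^2 ∂P)
          - 2*(∫ ω in g ⁻¹' {s}, (Z ω - m)*U ω ∂P) + ∫ ω in g ⁻¹' {s}, U ω ^ 2 ∂P := by
      simp_rw [e1]
      rw [integral_add hsub hint3.restrict,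
          integral_sub hint1.restrict (hint2.restrict.const_mul 2),
          integral_const_mul]
    have hVar : ∫ ω, (Z ω - m)^2 ∂(ProbabilityTheory.cond P (g ⁻¹' {s}))
        = a ⬝ᵥ (covM (ProbabilityTheory.cond P (g ⁻¹' {s})) z *ᵥ a)
          + ((a ⬝ᵥ meanV (ProbabilityTheory.cond P (g ⁻¹' {s})) z) - m) ^ 2 := by
      rw [var_shift hZQ2 m, cov_quad hzQ', hmQ]
    have hcond1 := cond_int P (g ⁻¹' {s}) (fun ω => (y ω - yhat ω) ^ 2)
    have hcond2 := cond_int P (g ⁻¹' {s}) (fun ω => (Z ω - m)^2)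
    rw [hcond1, split, cross s, sqU s]
    rw [← hVar, hcond2]
    field_simp
    ring
  -- group means and total expectation
  have hZint : Integrable Z P := hZ2.integrable (by norm_num)
  have hmtot : m = ∫ ω, Z ω ∂P := by rw [hm, hZ, dot_integral hzL2]
  have htot : ∫ ω, Z ω ∂P = (∫ ω in g ⁻¹' {(1:ℝ)}, Z ω ∂P) + ∫ ω in g ⁻¹' {(0:ℝ)}, Z ω ∂P := by
    rw [hBc, integral_add_compl hA hZint]
  set m1 : ℝ := a ⬝ᵥ meanV (ProbabilityTheory.cond P (g ⁻¹' {(1:ℝ)})) z with hm1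
  set m0 : ℝ := a ⬝ᵥ meanV (ProbabilityTheory.cond P (g ⁻¹' {(0:ℝ)})) z with hm0
  have hm1' : m1 = pA⁻¹ * ∫ ω in g ⁻¹' {(1:ℝ)}, Z ω ∂P := by
    haveI : IsProbabilityMeasure (ProbabilityTheory.cond P (g ⁻¹' {(1:ℝ)})) :=
      cond_isProbabilityMeasure hPA0
    rw [hm1, ← dot_integral (hzQ 1 hPA0), cond_int]
  have hm0' : m0 = pB⁻¹ * ∫ ω in g ⁻¹' {(0:ℝ)}, Z ω ∂P := by
    haveI : IsProbabilityMeasure (ProbabilityTheory.cond P (g ⁻¹' {(0:ℝ)})) :=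
      cond_isProbabilityMeasure hPB0
    rw [hm0, ← dot_integral (hzQ 0 hPB0), cond_int]
  have hmdecomp : m = pA * m1 + pB * m0 := by
    rw [hm1', hm0', hmtot, htot]
    field_simp
  -- translate RHS quantities
  have hΔSdot : a ⬝ᵥ (ΔSz *ᵥ a)
      = a ⬝ᵥ (covM (ProbabilityTheory.cond P (g ⁻¹' {(1:ℝ)})) z *ᵥ a)
        - a ⬝ᵥ (covM (ProbabilityTheory.cond P (g ⁻¹' {(0:ℝ)})) z *ᵥ a) := by
    rw [hΔS, sub_mulVec, dotProduct_sub]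
  have hΔμdot : a ⬝ᵥ Δμz = m1 - m0 := by
    rw [hm1, hm0]
    simp only [dotProduct, meanV]
    rw [← Finset.sum_sub_distrib]
    refine Finset.sum_congr rfl fun i _ => ?_
    rw [hΔ i]; ring
  -- put it together
  rw [group 1 hPA0, group 0 hPB0, hΔSdot, hΔμdot, ← hm1, ← hm0]
  have hpB' : pB = 1 - pA := by linarith
  rw [hmdecomp, hpB']
  congr 1
  ring
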